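/- Let m, n, r be positive integers with r < m and r < n, and let b ∈ M_{m×n}(K) be the block matrix with I_r in the upper-left corner and zeros elsewhere. Then the center of the Lie algebra (M_{n×m}(K), ⟦x,y⟧ = xby − ybx) equals the set of n×m matrices whose only possibly nonzero block is the lower-right (n−r)×(m−r) block. In particular, the center has dimension (m−r)(n−r). -/
import Mathlib


/-- For `0 < r < m`, `r < n` and `b` the rank-`r` normal form, the center of
`(M_{n×m}(K), ⟦x,y⟧ = xby − ybx)` is exactly the set of matrices whose only
possibly nonzero block is the lower-right `(n−r)×(m−r)` block; in particular
it has dimension `(m−r)(n−r)`. -/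
theorem center_normal_form {K : Type*} [Field K] [CharZero K] {m n r : ℕ}
    (hr : 0 < r) (hrm : r < m) (hrn : r < n)
    (b : Matrix (Fin m) (Fin n) K)
    (hb : ∀ i j, b i j = if ((i : ℕ) = (j : ℕ) ∧ (i : ℕ) < r) then 1 else 0) :
    (∀ w : Matrix (Fin n) (Fin m) K,
      (∀ x : Matrix (Fin n) (Fin m) K, x * b * w - w * b * x = 0)
        ↔ ∀ (i : Fin n) (j : Fin m), ((i : ℕ) < r ∨ (j : ℕ) < r) → w i j = 0) ∧
    ∃ Z : Submodule K (Matrix (Fin n) (Fin m) K),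
      (Z : Set (Matrix (Fin n) (Fin m) K))
          = {w | ∀ x : Matrix (Fin n) (Fin m) K, x * b * w - w * b * x = 0} ∧
      Module.finrank K Z = (m - r) * (n - r) := by
  -- key computation: multiplying by `b` on the right picks out the first `r` columns
  have mulb : ∀ (y : Matrix (Fin n) (Fin m) K) (p : Fin n) (t : Fin n),
      (y * b) p t = if h : (t : ℕ) < r then y p ⟨t, h.trans hrm⟩ else 0 := by
    intro y p t
    rw [Matrix.mul_apply]
    split
    · rename_i h
      rw [Finset.sum_eq_single (⟨(t : ℕ), h.trans hrm⟩ : Fin m)]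
      · rw [hb]; simp [h]
      · intro s _ hs
        rw [hb]
        have : ¬((s : ℕ) = (t : ℕ) ∧ (s : ℕ) < r) := by
          rintro ⟨h1, h2⟩; exact hs (Fin.ext h1)
        simp [this]
      · intro h; exact absurd (Finset.mem_univ _) h
    · rename_i h
      apply Finset.sum_eq_zero
      intro s _
      rw [hb]
      have : ¬((s : ℕ) = (t : ℕ) ∧ (s : ℕ) < r) := by
        rintro ⟨h1, h2⟩; exact h (h1 ▸ h2)
      simp [this]
  have key : ∀ w : Matrix (Fin n) (Fin m) K,
      (∀ x : Matrix (Fin n) (Fin m) K, x * b * w - w * b * x = 0)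
        ↔ ∀ (i : Fin n) (j : Fin m), ((i : ℕ) < r ∨ (j : ℕ) < r) → w i j = 0 := by
    intro w
    constructor
    · intro h i j hij
      rcases hij with hi | hj
      · -- use x with single entry at (⟨r⟩, ⟨i⟩)
        have hir : (i : ℕ) < m := hi.trans hrm
        set x : Matrix (Fin n) (Fin m) K :=
          Matrix.of fun p q =>
            if p = (⟨r, hrn⟩ : Fin n) ∧ q = (⟨(i : ℕ), hir⟩ : Fin m) then (1 : K) else 0
          with hx
        have hcomm := h x
        rw [sub_eq_zero] at hcomm
        have h2 := congrFun (congrFun hcomm ⟨r, hrn⟩) j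
        rw [Matrix.mul_apply, Matrix.mul_apply] at h2
        simp only [mulb] at h2
        have hL : ∑ t : Fin n,
            (if h : (t : ℕ) < r then x ⟨r, hrn⟩ ⟨t, h.trans hrm⟩ else 0) * w t j
            = w i j := by
          rw [Finset.sum_eq_single i]
          · rw [dif_pos hi]
            have hx1 : x ⟨r, hrn⟩ ⟨(i : ℕ), hi.trans hrm⟩ = 1 := by simp [hx]
            rw [hx1, one_mul]
          · intro t _ ht
            split
            · rename_i h'
              have hx0 : x ⟨r, hrn⟩ ⟨(t : ℕ), h'.trans hrm⟩ = 0 := by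
                simp only [hx, Matrix.of_apply, ite_eq_right_iff, and_imp]
                intro _ hc
                rw [Fin.mk.injEq] at hc
                exact absurd (Fin.ext hc) ht
              rw [hx0, zero_mul]
            · rw [zero_mul]
          · intro h; exact absurd (Finset.mem_univ _) h
        have hR : ∑ t : Fin n,
            (if h : (t : ℕ) < r then w ⟨r, hrn⟩ ⟨t, h.trans hrm⟩ else 0) * x t j
            = 0 := by
          apply Finset.sum_eq_zero
          intro t _
          split
          · rename_i h'
            have hx0 : x t j = 0 := by
              simp only [hx, Matrix.of_apply, ite_eq_right_iff, and_imp]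
              intro hta _
              have : (t : ℕ) = r := congrArg Fin.val hta
              omega
            rw [hx0, mul_zero]
          · rw [zero_mul]
        rw [hL, hR] at h2
        exact h2
      · -- use x with single entry at (⟨j⟩, ⟨r⟩)
        have hjn : (j : ℕ) < n := hj.trans hrn
        set x : Matrix (Fin n) (Fin m) K :=
          Matrix.of fun p q =>
            if p = (⟨(j : ℕ), hjn⟩ : Fin n) ∧ q = (⟨r, hrm⟩ : Fin m) then (1 : K) else 0
          with hx
        have hcomm := h x
        rw [sub_eq_zero] at hcomm
        have h2 := congrFun (congrFun hcomm i) ⟨r, hrm⟩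
        rw [Matrix.mul_apply, Matrix.mul_apply] at h2
        simp only [mulb] at h2
        have hL : ∑ t : Fin n,
            (if h : (t : ℕ) < r then x i ⟨t, h.trans hrm⟩ else 0) * w t ⟨r, hrm⟩
            = 0 := by
          apply Finset.sum_eq_zero
          intro t _
          split
          · rename_i h'
            have hx0 : x i ⟨(t : ℕ), h'.trans hrm⟩ = 0 := by
              simp only [hx, Matrix.of_apply, ite_eq_right_iff, and_imp]
              intro _ htc
              have : (t : ℕ) = r := congrArg Fin.val htc
              omega
            rw [hx0, zero_mul]
          · rw [zero_mul]
        have hR : ∑ t : Fin n,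
            (if h : (t : ℕ) < r then w i ⟨t, h.trans hrm⟩ else 0) * x t ⟨r, hrm⟩
            = w i j := by
          rw [Finset.sum_eq_single (⟨(j : ℕ), hjn⟩ : Fin n)]
          · rw [dif_pos (show ((⟨(j : ℕ), hjn⟩ : Fin n) : ℕ) < r from hj)]
            have hx1 : x ⟨(j : ℕ), hjn⟩ ⟨r, hrm⟩ = 1 := by simp [hx]
            rw [hx1, mul_one]
          · intro t _ ht
            split
            · have hx0 : x t ⟨r, hrm⟩ = 0 := by
                simp only [hx, Matrix.of_apply, ite_eq_right_iff, and_imp]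
                intro hta _
                exact absurd hta ht
              rw [hx0, mul_zero]
            · rw [zero_mul]
          · intro h; exact absurd (Finset.mem_univ _) h
        rw [hL, hR] at h2
        exact h2.symm
    · intro hw x
      rw [sub_eq_zero]
      ext p q
      rw [Matrix.mul_apply, Matrix.mul_apply]
      simp only [mulb]
      have hL : ∑ t : Fin n, (if h : (t : ℕ) < r then x p ⟨t, h.trans hrm⟩ else 0) * w t q
          = 0 := by
        apply Finset.sum_eq_zero
        intro t _
        split
        · rename_i h'
          rw [hw t q (Or.inl h'), mul_zero]
        · rw [zero_mul]
      have hR : ∑ t : Fin n, (if h : (t : ℕ) < r then w p ⟨t, h.trans hrm⟩ else 0) * x t q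
          = 0 := by
        apply Finset.sum_eq_zero
        intro t _
        split
        · rename_i h'
          rw [hw p ⟨t, h'.trans hrm⟩ (Or.inr h'), zero_mul]
        · rw [zero_mul]
      rw [hL, hR]
  refine ⟨key, ?_⟩
  -- the submodule of matrices supported in the lower-right block
  let Z : Submodule K (Matrix (Fin n) (Fin m) K) :=
    { carrier := {w | ∀ (i : Fin n) (j : Fin m), ((i : ℕ) < r ∨ (j : ℕ) < r) → w i j = 0}
      add_mem' := by
        intro a b ha hb i j hij
        simp only [Matrix.add_apply, ha i j hij, hb i j hij, add_zero]
      zero_mem' := by intro i j hij; rfl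
      smul_mem' := by
        intro c a ha i j hij
        simp only [Matrix.smul_apply, ha i j hij, smul_zero] }
  have hmem : ∀ w : Matrix (Fin n) (Fin m) K, w ∈ Z ↔
      ∀ (i : Fin n) (j : Fin m), ((i : ℕ) < r ∨ (j : ℕ) < r) → w i j = 0 := by
    intro w; exact Iff.rfl
  refine ⟨Z, ?_, ?_⟩
  · ext w
    simp only [SetLike.mem_coe, Set.mem_setOf_eq, hmem]
    exact (key w).symm
  · -- compute the dimension via a linear equivalence with (n-r)×(m-r) matrices
    have e : Z ≃ₗ[K] Matrix (Fin (n - r)) (Fin (m - r)) K := by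
      refine
        { toFun := fun w => Matrix.of fun a c =>
            w.1 ⟨r + (a : ℕ), by omega⟩ ⟨r + (c : ℕ), by omega⟩
          map_add' := by intro u v; ext a c; simp
          map_smul' := by intro k u; ext a c; simp
          invFun := fun M =>
            ⟨Matrix.of fun i j =>
              if h : r ≤ (i : ℕ) ∧ r ≤ (j : ℕ) then
                M ⟨(i : ℕ) - r, by omega⟩ ⟨(j : ℕ) - r, by omega⟩ else 0,
              (hmem _).mpr ?_⟩
          left_inv := ?_
          right_inv := ?_ }
      · intro i j hij
        simp only [Matrix.of_apply]
        rw [dif_neg]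
        omega
      · intro w
        ext i j
        simp only [Matrix.of_apply]
        split
        · rename_i h
          have h1 : (⟨r + ((i : ℕ) - r), by omega⟩ : Fin n) = i :=
            Fin.ext (by show r + ((i : ℕ) - r) = (i : ℕ); omega)
          have h2 : (⟨r + ((j : ℕ) - r), by omega⟩ : Fin m) = j :=
            Fin.ext (by show r + ((j : ℕ) - r) = (j : ℕ); omega)
          rw [h1, h2]
        · rename_i h
          exact (((hmem _).mp w.2) i j (by omega)).symm
      · intro M
        ext a c
        simp only [Matrix.of_apply]
        rw [dif_pos ⟨Nat.le_add_right _ _, Nat.le_add_right _ _⟩]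
        have h1 : (⟨r + (a : ℕ) - r, by omega⟩ : Fin (n - r)) = a :=
          Fin.ext (by show r + (a : ℕ) - r = (a : ℕ); omega)
        have h2 : (⟨r + (c : ℕ) - r, by omega⟩ : Fin (m - r)) = c :=
          Fin.ext (by show r + (c : ℕ) - r = (c : ℕ); omega)
        rw [h1, h2]
    rw [LinearEquiv.finrank_eq e, Module.finrank_matrix]
    simp [Nat.mul_comm]
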